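/- Fix d ≥ 1, T > 0, a compact interval Θ = [θ_min, θ_max] ⊂ (0,∞), a link function Φ, and a smooth ℤ^d-periodic initial value u_0. There exists a constant D > 0, depending only on d, T, Θ, Φ and u_0, such that: for every θ ∈ Θ and all continuous ℤ^d-periodic F, F₀ : ℝ^d → ℝ, if u_F and u_{F₀} are smooth classical solutions of the heat equation with absorptions Φ∘F and Φ∘F₀ respectively, both with diffusivity θ and initial value u_0, then ‖u_F − u_{F₀}‖_{L²(Q)} ≤ D ‖F − F₀‖_{L²(𝕋^d)}. (Lemma 'bounds', item (i): Lipschitz continuity of the forward map F ↦ K_θF in L².) -/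

import Mathlib

open MeasureTheory Real Filter

noncomputable section

/-- Partial derivative in the `i`-th spatial coordinate. -/
def pder {d : ℕ} (i : Fin d) (v : (Fin d → ℝ) → ℝ) : (Fin d → ℝ) → ℝ :=
  fun x => deriv (fun s => v (Function.update x i s)) (x i)

/-- Spatial Laplacian `Δ_x = ∑ᵢ ∂²/∂xᵢ²`. -/
def lap {d : ℕ} (v : (Fin d → ℝ) → ℝ) : (Fin d → ℝ) → ℝ :=
  fun x => ∑ i : Fin d, pder i (pder i v) x

/-- Multi-index spatial derivative `∂^j`. -/
def mder {d : ℕ} (j : Fin d → ℕ) (v : (Fin d → ℝ) → ℝ) : (Fin d → ℝ) → ℝ :=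
  (List.finRange d).foldr (fun i acc => (pder i)^[j i] acc) v

/-- `ℤ^d`-periodicity of a function on `ℝ^d`. -/
def ZPer {d : ℕ} (F : (Fin d → ℝ) → ℝ) : Prop :=
  ∀ (x : Fin d → ℝ) (k : Fin d → ℤ), F (fun i => x i + (k i : ℝ)) = F x

/-- `ℤ^d`-periodicity in the space variable. -/
def ZPerSpace {d : ℕ} (u : (Fin d → ℝ) → ℝ → ℝ) : Prop :=
  ∀ t : ℝ, ZPer fun x => u x t

/-- The fundamental domain `[0,1]^d` of the torus. -/
def unitCube (d : ℕ) : Set (Fin d → ℝ) := Set.Icc 0 1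

/-- `L²`-norm on the torus. -/
def l2T {d : ℕ} (F : (Fin d → ℝ) → ℝ) : ℝ :=
  Real.sqrt (∫ x in unitCube d, (F x) ^ 2)

/-- `L²`-norm on `Q = 𝕋^d × (0,T)`. -/
def l2Q {d : ℕ} (T : ℝ) (u : (Fin d → ℝ) → ℝ → ℝ) : ℝ :=
  Real.sqrt (∫ t in Set.Ioc (0 : ℝ) T, ∫ x in unitCube d, (u x t) ^ 2)

/-- Supremum norm over space. -/
def supT {d : ℕ} (F : (Fin d → ℝ) → ℝ) : ℝ := ⨆ x, |F x|

/-- Supremum norm over `𝕋^d × [0,T]`. -/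
def supQ {d : ℕ} (T : ℝ) (u : (Fin d → ℝ) → ℝ → ℝ) : ℝ :=
  ⨆ x, ⨆ t ∈ Set.Icc (0 : ℝ) T, |u x t|

/-- Squared Sobolev `H^β`-norm on the torus:  `∑_{|j| ≤ β} ‖∂^j F‖²_{L²(𝕋^d)}`. -/
def hSobSq {d : ℕ} (β : ℕ) (F : (Fin d → ℝ) → ℝ) : ℝ :=
  ∑ j ∈ Finset.univ.filter (fun j : Fin d → Fin (β + 1) => (∑ i, (j i : ℕ)) ≤ β),
    ∫ x in unitCube d, (mder (fun i => (j i : ℕ)) F x) ^ 2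

/-- Sobolev `H^β`-norm on the torus. -/
def hSob {d : ℕ} (β : ℕ) (F : (Fin d → ℝ) → ℝ) : ℝ := Real.sqrt (hSobSq β F)

/-- Squared parabolic Sobolev `H^{2,1}(Q)`-norm. -/
def h21Sq {d : ℕ} (T : ℝ) (u : (Fin d → ℝ) → ℝ → ℝ) : ℝ :=
  (∫ t in Set.Ioc (0 : ℝ) T,
      ∑ j ∈ Finset.univ.filter (fun j : Fin d → Fin 3 => (∑ i, (j i : ℕ)) ≤ 2),
        ∫ x in unitCube d, (mder (fun i => (j i : ℕ)) (fun y => u y t) x) ^ 2)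
    + ∫ x in unitCube d, ∫ t in Set.Ioc (0 : ℝ) T, ((u x t) ^ 2 + (deriv (u x) t) ^ 2)

/-- Parabolic Sobolev `H^{2,1}(Q)`-norm. -/
def h21 {d : ℕ} (T : ℝ) (u : (Fin d → ℝ) → ℝ → ℝ) : ℝ := Real.sqrt (h21Sq T u)

/-- Smoothness of a function of space and time. -/
def SmoothQ {d : ℕ} (u : (Fin d → ℝ) → ℝ → ℝ) : Prop :=
  ContDiff ℝ (⊤ : ℕ∞) fun p : (Fin d → ℝ) × ℝ => u p.1 p.2

/-- A smooth classical solution of the heat equation with absorption `f`,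
diffusivity `θ` and initial value `u0`. -/
def HeatSol {d : ℕ} (T θ : ℝ) (f u0 : (Fin d → ℝ) → ℝ) (u : (Fin d → ℝ) → ℝ → ℝ) : Prop :=
  SmoothQ u ∧ ZPerSpace u ∧
    (∀ (x : Fin d → ℝ), ∀ t ∈ Set.Ioc (0 : ℝ) T,
      deriv (u x) t = θ / 2 * lap (fun y => u y t) x - f x * u x t) ∧
    ∀ x, u x 0 = u0 x

/-- A smooth solution of the inhomogeneous problem with forcing `g` and
zero initial value (`v = 𝓛_{θ,f}⁻¹ g`). -/
def InhomSol {d : ℕ} (T θ : ℝ) (f : (Fin d → ℝ) → ℝ) (g v : (Fin d → ℝ) → ℝ → ℝ) : Prop :=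
  SmoothQ v ∧ ZPerSpace v ∧
    (∀ (x : Fin d → ℝ), ∀ t ∈ Set.Ioc (0 : ℝ) T,
      deriv (v x) t = θ / 2 * lap (fun y => v y t) x - f x * v x t + g x t) ∧
    ∀ x, v x 0 = 0

/-- A link function: a smooth function `Φ : ℝ → (fmin, ∞)` with strictly positive
derivative and all derivatives bounded. -/
structure LinkFun where
  toFun : ℝ → ℝ
  fmin : ℝ
  fmin_pos : 0 < fmin
  smooth : ContDiff ℝ (⊤ : ℕ∞) toFun
  gt_fmin : ∀ x, fmin < toFun x
  deriv_pos : ∀ x, 0 < deriv toFun x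
  derivs_bdd : ∀ n : ℕ, 1 ≤ n → ∃ C, ∀ x, |iteratedDeriv n toFun x| ≤ C

/-- The linearized solution `I_{θ,F} h` in direction `h`, associated with a solution `u`. -/
def LinSol {d : ℕ} (T θ : ℝ) (Φ : LinkFun) (F h : (Fin d → ℝ) → ℝ)
    (u z : (Fin d → ℝ) → ℝ → ℝ) : Prop :=
  SmoothQ z ∧ ZPerSpace z ∧
    (∀ (x : Fin d → ℝ), ∀ t ∈ Set.Ioc (0 : ℝ) T,
      deriv (z x) t = θ / 2 * lap (fun y => z y t) x - Φ.toFun (F x) * z x t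
        + h x * deriv Φ.toFun (F x) * u x t) ∧
    ∀ x, z x 0 = 0

/-- The `θ`-derivative solution `K̇_θ F`, associated with a solution `u`. -/
def ThetaDerivSol {d : ℕ} (T θ : ℝ) (Φ : LinkFun) (F : (Fin d → ℝ) → ℝ)
    (u w : (Fin d → ℝ) → ℝ → ℝ) : Prop :=
  SmoothQ w ∧ ZPerSpace w ∧
    (∀ (x : Fin d → ℝ), ∀ t ∈ Set.Ioc (0 : ℝ) T,
      deriv (w x) t = θ / 2 * lap (fun y => w y t) x - Φ.toFun (F x) * w x t
        + 1 / 2 * lap (fun y => u y t) x) ∧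
    ∀ x, w x 0 = 0

/-- Dual Sobolev norm `‖G‖_{(H²)*}` on the torus. -/
def h2dual {d : ℕ} (G : (Fin d → ℝ) → ℝ) : ℝ :=
  sSup {r : ℝ | ∃ g : (Fin d → ℝ) → ℝ, ContDiff ℝ (⊤ : ℕ∞) g ∧ ZPer g ∧ hSob 2 g ≤ 1 ∧
    r = |∫ x in unitCube d, G x * g x|}

end

open Topology

noncomputable section

variable {d : ℕ}

lemma htop1 : (1 : WithTop ℕ∞) ≤ ((⊤ : ℕ∞) : WithTop ℕ∞) := by exact_mod_cast le_top
lemma htops : ((⊤ : ℕ∞) : WithTop ℕ∞) + 1 ≤ ((⊤ : ℕ∞) : WithTop ℕ∞) := by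
  norm_cast

lemma htop0 : ((⊤ : ℕ∞) : WithTop ℕ∞) ≠ 0 := by simp

lemma slice_hasDerivAt {v : (Fin d → ℝ) → ℝ} (hv : Differentiable ℝ v) (x : Fin d → ℝ)
    (i : Fin d) (s : ℝ) :
    HasDerivAt (fun s' => v (Function.update x i s'))
      (fderiv ℝ v (Function.update x i s) (Pi.single i 1)) s :=
  (hv _).hasFDerivAt.comp_hasDerivAt s (hasDerivAt_update x i s)

lemma pder_eq {v : (Fin d → ℝ) → ℝ} (hv : Differentiable ℝ v) (i : Fin d) (x : Fin d → ℝ) :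
    pder i v x = fderiv ℝ v x (Pi.single i 1) := by
  have h := (slice_hasDerivAt hv x i (x i)).deriv
  rwa [Function.update_eq_self] at h

lemma pder_apply_update {v : (Fin d → ℝ) → ℝ} (i : Fin d) (x : Fin d → ℝ) (s : ℝ) :
    pder i v (Function.update x i s) = deriv (fun s' => v (Function.update x i s')) s := by
  unfold pder
  rw [Function.update_self]
  congr 1
  funext s'
  rw [Function.update_idem]

lemma contDiff_pder {v : (Fin d → ℝ) → ℝ} (hv : ContDiff ℝ (⊤ : ℕ∞) v) (i : Fin d) :
    ContDiff ℝ (⊤ : ℕ∞) (pder i v) := by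
  have : pder i v = fun x => fderiv ℝ v x (Pi.single i 1) :=
    funext (pder_eq (hv.differentiable htop0) i)
  rw [this]
  exact (hv.fderiv_right htops).clm_apply contDiff_const

lemma pder_sub {v w : (Fin d → ℝ) → ℝ} (hv : ContDiff ℝ (⊤ : ℕ∞) v)
    (hw : ContDiff ℝ (⊤ : ℕ∞) w) (i : Fin d) :
    pder i (fun y => v y - w y) = fun x => pder i v x - pder i w x := by
  funext x
  rw [pder_eq ((hv.sub hw).differentiable htop0) i, pder_eq (hv.differentiable htop0) i,
    pder_eq (hw.differentiable htop0) i,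
    fderiv_fun_sub ((hv.differentiable htop0) x) ((hw.differentiable htop0) x)]
  rfl

lemma pder_neg {v : (Fin d → ℝ) → ℝ} (hv : ContDiff ℝ (⊤ : ℕ∞) v) (i : Fin d) :
    pder i (fun y => -v y) = fun x => -pder i v x := by
  funext x
  rw [pder_eq ((hv.neg).differentiable htop0) i, pder_eq (hv.differentiable htop0) i,
    fderiv_fun_neg]
  rfl

lemma lap_sub {v w : (Fin d → ℝ) → ℝ} (hv : ContDiff ℝ (⊤ : ℕ∞) v)
    (hw : ContDiff ℝ (⊤ : ℕ∞) w) (x : Fin d → ℝ) :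
    lap (fun y => v y - w y) x = lap v x - lap w x := by
  unfold lap
  rw [← Finset.sum_sub_distrib]
  refine Finset.sum_congr rfl fun i _ => ?_
  rw [pder_sub hv hw i, pder_sub (contDiff_pder hv i) (contDiff_pder hw i) i]

lemma lap_neg {v : (Fin d → ℝ) → ℝ} (hv : ContDiff ℝ (⊤ : ℕ∞) v) (x : Fin d → ℝ) :
    lap (fun y => -v y) x = -lap v x := by
  unfold lap
  rw [← Finset.sum_neg_distrib]
  refine Finset.sum_congr rfl fun i _ => ?_
  rw [pder_neg hv i, pder_neg (contDiff_pder hv i) i]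

lemma ZPer.pderZ {v : (Fin d → ℝ) → ℝ} (hv : ZPer v) (i : Fin d) : ZPer (pder i v) := by
  intro x k
  unfold pder
  set g : ℝ → ℝ := fun s => v (Function.update x i s) with hg
  have h1 : (fun s => v (Function.update (fun j => x j + (k j : ℝ)) i s))
      = fun s => g (s - (k i : ℝ)) := by
    funext s
    rw [hg]
    simp only []
    rw [← hv (Function.update x i (s - (k i : ℝ))) k]
    congr 1
    funext j
    by_cases hj : j = i
    · subst hj; simp
    · simp [Function.update_of_ne hj]
  rw [h1]
  show deriv (fun s => g (s - (k i : ℝ))) (x i + (k i : ℝ)) = deriv g (x i)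
  rw [deriv_comp_sub_const, add_sub_cancel_right]

lemma upd_insert {n : ℕ} (i : Fin (n + 1)) (a s : ℝ) (y : Fin n → ℝ) :
    Function.update (i.insertNth (α := fun _ => ℝ) a y) i s
      = i.insertNth (α := fun _ => ℝ) s y := by
  funext j
  refine Fin.succAboveCases i ?_ ?_ j
  · simp
  · intro j'
    rw [Function.update_of_ne (Fin.succAbove_ne i j')]
    simp

lemma integral_pder_eq_zero {n : ℕ} {v : (Fin (n + 1) → ℝ) → ℝ} (hv : ContDiff ℝ (⊤ : ℕ∞) v)
    (hper : ZPer v) (i : Fin (n + 1)) :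
    ∫ x in unitCube (n + 1), pder i v x = 0 := by
  set e : ℝ × (Fin n → ℝ) ≃ᵐ (Fin (n + 1) → ℝ) :=
    (MeasurableEquiv.piFinSuccAbove (fun _ => ℝ) i).symm with he
  have hem : MeasurePreserving e :=
    (volume_preserving_piFinSuccAbove (fun _ : Fin (n + 1) => ℝ) i).symm _
  have hpre : (e ⁻¹' unitCube (n + 1)) =
      Set.Icc (0 : ℝ) 1 ×ˢ Set.Icc (0 : Fin n → ℝ) 1 :=
    ((Fin.insertNthOrderIso (fun _ => ℝ) i).preimage_Icc _ _).trans (Set.Icc_prod_eq _ _)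
  have hins : Continuous fun p : ℝ × (Fin n → ℝ) => (i.insertNth (α := fun _ => ℝ) p.1 p.2) :=
    Continuous.finInsertNth (A := fun _ => ℝ) i continuous_fst continuous_snd
  have hcont : Continuous fun p : ℝ × (Fin n → ℝ) => pder i v (i.insertNth (α := fun _ => ℝ) p.1 p.2) :=
    ((contDiff_pder hv i).continuous).comp hins
  have heapp : ∀ p : ℝ × (Fin n → ℝ), e p = i.insertNth (α := fun _ => ℝ) p.1 p.2 := fun p => rfl
  have hint : IntegrableOn (fun p : ℝ × (Fin n → ℝ) => pder i v (i.insertNth (α := fun _ => ℝ) p.1 p.2))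
      (Set.Icc (0 : ℝ) 1 ×ˢ Set.Icc (0 : Fin n → ℝ) 1) volume :=
    hcont.continuousOn.integrableOn_compact (isCompact_Icc.prod isCompact_Icc)
  have step1 : ∫ x in unitCube (n + 1), pder i v x
      = ∫ p in Set.Icc (0 : ℝ) 1 ×ˢ Set.Icc (0 : Fin n → ℝ) 1,
          pder i v (i.insertNth (α := fun _ => ℝ) p.1 p.2) ∂((volume : Measure ℝ).prod volume) := by
    rw [← hem.setIntegral_preimage_emb e.measurableEmbedding (fun x => pder i v x)
      (unitCube (n + 1)), hpre, ← Measure.volume_eq_prod]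
    exact setIntegral_congr_fun ((measurableSet_Icc).prod measurableSet_Icc)
      fun p _ => by rw [heapp]
  rw [step1, ← Measure.prod_restrict,
    integral_prod_symm _ (by rwa [Measure.prod_restrict, ← Measure.volume_eq_prod])]
  have inner0 : ∀ y : Fin n → ℝ,
      (∫ s in Set.Icc (0 : ℝ) 1, pder i v (i.insertNth (α := fun _ => ℝ) s y)) = 0 := by
    intro y
    set h : ℝ → ℝ := fun s => v (i.insertNth (α := fun _ => ℝ) s y) with hh
    have hhs : ContDiff ℝ (⊤ : ℕ∞) h := by
      have : h = fun s => v (Function.update (i.insertNth (α := fun _ => ℝ) 0 y) i s) := by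
        funext s; rw [upd_insert]
      rw [this]
      exact hv.comp (contDiff_update _ _ _)
    have hpd : ∀ s, pder i v (i.insertNth (α := fun _ => ℝ) s y) = deriv h s := by
      intro s
      rw [← upd_insert i 0 s y, pder_apply_update]
      congr 1
      funext s'
      rw [upd_insert]
    have hcd : Continuous (deriv h) := hhs.continuous_deriv htop1
    have : (∫ s in Set.Icc (0 : ℝ) 1, pder i v (i.insertNth (α := fun _ => ℝ) s y))
        = ∫ s in (0 : ℝ)..1, deriv h s := by
      rw [intervalIntegral.integral_of_le zero_le_one, ← integral_Icc_eq_integral_Ioc]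
      exact setIntegral_congr_fun measurableSet_Icc fun s _ => hpd s
    rw [this, intervalIntegral.integral_deriv_eq_sub
      (fun s _ => (hhs.differentiable htop0) s)
      (hcd.intervalIntegrable 0 1)]
    have hper1 : h 1 = h 0 := by
      have h10 : (fun j => i.insertNth (α := fun _ => ℝ) 0 y j
            + (((Pi.single i 1 : Fin (n + 1) → ℤ) j : ℤ) : ℝ))
          = i.insertNth (α := fun _ => ℝ) 1 y := by
        funext j
        refine Fin.succAboveCases i ?_ ?_ j
        · simp
        · intro j'
          simp [Pi.single_eq_of_ne (Fin.succAbove_ne i j')]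
      have h2 := hper (i.insertNth (α := fun _ => ℝ) 0 y) (Pi.single i 1)
      rw [h10] at h2
      exact h2
    rw [hper1, sub_self]
  calc (∫ y in Set.Icc (0 : Fin n → ℝ) 1, ∫ s in Set.Icc (0 : ℝ) 1,
        pder i v (i.insertNth (α := fun _ => ℝ) s y))
      = ∫ y in Set.Icc (0 : Fin n → ℝ) 1, (0 : ℝ) :=
        setIntegral_congr_fun measurableSet_Icc fun y _ => inner0 y
    _ = 0 := by simp

lemma second_deriv_nonpos_at_max {h : ℝ → ℝ} (hh : ContDiff ℝ (⊤ : ℕ∞) h) {a : ℝ}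
    (hmax : ∀ s, h s ≤ h a) : deriv (deriv h) a ≤ 0 := by
  by_contra hc
  push_neg at hc
  have hd : Differentiable ℝ h := hh.differentiable htop0
  have hd' : ContDiff ℝ (⊤ : ℕ∞) (deriv h) := (contDiff_infty_iff_deriv.mp hh).2
  have hd1 : deriv h a = 0 :=
    IsLocalMax.deriv_eq_zero (Filter.Eventually.of_forall fun s => hmax s)
  have htend : Tendsto (slope (deriv h) a) (𝓝[>] a) (𝓝 (deriv (deriv h) a)) :=
    (hasDerivAt_iff_tendsto_slope.mp
      ((hd'.differentiable htop0) a).hasDerivAt).mono_left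
      (nhdsWithin_mono _ fun s hs => ne_of_gt hs)
  have hev : ∀ᶠ s in 𝓝[>] a, 0 < slope (deriv h) a s := htend.eventually (lt_mem_nhds hc)
  have hev2 : ∀ᶠ s in 𝓝[>] a, 0 < deriv h s := by
    filter_upwards [hev, self_mem_nhdsWithin] with s h1 h2
    rw [slope_def_field, hd1, sub_zero] at h1
    have hsa : 0 < s - a := sub_pos.mpr h2
    have := mul_pos h1 hsa
    rwa [div_mul_cancel₀ _ (ne_of_gt hsa)] at this
  rw [Filter.Eventually, mem_nhdsGT_iff_exists_Ioo_subset] at hev2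
  obtain ⟨b, hb, hsub⟩ := hev2
  have hsm : StrictMonoOn h (Set.Icc a b) :=
    strictMonoOn_of_deriv_pos (convex_Icc a b) hh.continuous.continuousOn
      (fun s hs => hsub (by rwa [interior_Icc] at hs))
  have : h a < h b :=
    hsm (Set.left_mem_Icc.mpr (le_of_lt hb)) (Set.right_mem_Icc.mpr (le_of_lt hb)) hb
  exact absurd (hmax b) (not_le.mpr this)

lemma deriv_nonneg_of_max_right {f : ℝ → ℝ} {f' t₀ : ℝ} (hf : HasDerivAt f f' t₀)
    (h0 : 0 < t₀) (hmax : ∀ t ∈ Set.Icc (0 : ℝ) t₀, f t ≤ f t₀) : 0 ≤ f' := by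
  have htend : Tendsto (slope f t₀) (𝓝[<] t₀) (𝓝 f') :=
    (hasDerivAt_iff_tendsto_slope.mp hf).mono_left
      (nhdsWithin_mono _ fun s hs => ne_of_lt hs)
  refine ge_of_tendsto htend ?_
  filter_upwards [Ioo_mem_nhdsLT_of_mem ⟨h0, le_refl t₀⟩] with t ht
  have h1 : f t - f t₀ ≤ 0 := sub_nonpos.mpr (hmax t ⟨le_of_lt ht.1, le_of_lt ht.2⟩)
  have h2 : t - t₀ ≤ 0 := le_of_lt (sub_neg.mpr ht.2)
  rw [slope_def_field, div_nonneg_iff]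
  exact Or.inr ⟨h1, h2⟩

lemma ZPer.reduce {F : (Fin d → ℝ) → ℝ} (hF : ZPer F) (x : Fin d → ℝ) :
    ∃ y ∈ unitCube d, F x = F y := by
  refine ⟨fun i => Int.fract (x i), Set.mem_Icc.mpr ⟨fun i => Int.fract_nonneg _,
    fun i => (Int.fract_lt_one _).le⟩, ?_⟩
  rw [← hF (fun i => Int.fract (x i)) (fun i => ⌊x i⌋)]
  congr 1
  funext i
  exact (Int.fract_add_floor (x i)).symm

lemma contDiff_slice_t {u : (Fin d → ℝ) → ℝ → ℝ}
    (hu : ContDiff ℝ (⊤ : ℕ∞) fun p : (Fin d → ℝ) × ℝ => u p.1 p.2) (x : Fin d → ℝ) :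
    ContDiff ℝ (⊤ : ℕ∞) (u x) :=
  hu.comp (contDiff_const.prodMk contDiff_id)

lemma contDiff_slice_x {u : (Fin d → ℝ) → ℝ → ℝ}
    (hu : ContDiff ℝ (⊤ : ℕ∞) fun p : (Fin d → ℝ) × ℝ => u p.1 p.2) (t : ℝ) :
    ContDiff ℝ (⊤ : ℕ∞) (fun y => u y t) :=
  hu.comp (contDiff_id.prodMk contDiff_const)

lemma max_principle {T θ : ℝ} (hT : 0 < T) (hθ : 0 ≤ θ) {a : (Fin d → ℝ) → ℝ}
    (ha : ∀ x, 0 ≤ a x) {u : (Fin d → ℝ) → ℝ → ℝ}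
    (hu : ContDiff ℝ (⊤ : ℕ∞) fun p : (Fin d → ℝ) × ℝ => u p.1 p.2)
    (hper : ∀ t, ZPer fun x => u x t)
    (hpde : ∀ x : Fin d → ℝ, ∀ t ∈ Set.Ioc (0 : ℝ) T,
      deriv (u x) t = θ / 2 * lap (fun y => u y t) x - a x * u x t)
    {M : ℝ} (hM0 : 0 ≤ M) (hinit : ∀ x, u x 0 ≤ M) :
    ∀ x, ∀ t ∈ Set.Icc (0 : ℝ) T, u x t ≤ M := by
  have key : ∀ ε : ℝ, 0 < ε → ∀ z : Fin d → ℝ, ∀ s ∈ Set.Icc (0 : ℝ) T,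
      u z s - ε * s ≤ M := by
    intro ε hε
    have hcube : ∀ z ∈ unitCube d, ∀ s ∈ Set.Icc (0 : ℝ) T, u z s - ε * s ≤ M := by
      by_contra hcon
      push_neg at hcon
      obtain ⟨z₁, hz₁, s₁, hs₁, hgt⟩ := hcon
      set φ : (Fin d → ℝ) × ℝ → ℝ := fun p => u p.1 p.2 - ε * p.2 with hφ
      have hφc : Continuous φ := hu.continuous.sub (continuous_const.mul continuous_snd)
      set K : Set ((Fin d → ℝ) × ℝ) := unitCube d ×ˢ Set.Icc (0 : ℝ) T with hK
      have hKc : IsCompact K := (isCompact_Icc).prod isCompact_Icc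
      have hKne : K.Nonempty :=
        ⟨(0, 0), ⟨Set.left_mem_Icc.mpr zero_le_one, Set.left_mem_Icc.mpr hT.le⟩⟩
      obtain ⟨p₀, hp₀K, hmax⟩ := hKc.exists_isMaxOn hKne hφc.continuousOn
      have hmax' : ∀ p ∈ K, φ p ≤ φ p₀ := hmax
      set x₀ := p₀.1 with hx₀
      set t₀ := p₀.2 with ht₀
      have hx₀K : x₀ ∈ unitCube d := hp₀K.1
      have ht₀K : t₀ ∈ Set.Icc (0 : ℝ) T := hp₀K.2
      have hMlt : M < φ p₀ := lt_of_lt_of_le hgt (hmax' (z₁, s₁) ⟨hz₁, hs₁⟩)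
      have ht₀pos : 0 < t₀ := by
        rcases lt_or_eq_of_le ht₀K.1 with h | h
        · exact h
        · exfalso
          have hφeq : φ p₀ = u x₀ 0 - ε * 0 := by
            show u x₀ t₀ - ε * t₀ = u x₀ 0 - ε * 0
            rw [← h]
          rw [hφeq, mul_zero, sub_zero] at hMlt
          exact absurd (hinit x₀) (not_le.mpr hMlt)
      have hut : HasDerivAt (u x₀) (deriv (u x₀) t₀) t₀ :=
        (((contDiff_slice_t hu x₀).differentiable htop0) t₀).hasDerivAt
      have hf : HasDerivAt (fun s => u x₀ s - ε * s) (deriv (u x₀) t₀ - ε) t₀ := by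
        exact (hut.sub ((hasDerivAt_id t₀).const_mul ε)).congr_deriv (by simp)
      have hd1 : 0 ≤ deriv (u x₀) t₀ - ε := by
        refine deriv_nonneg_of_max_right hf ht₀pos fun s hs => ?_
        have : φ (x₀, s) ≤ φ p₀ := hmax' (x₀, s) ⟨hx₀K, ⟨hs.1, le_trans hs.2 ht₀K.2⟩⟩
        simpa [hφ] using this
      have hvmax : ∀ y, u y t₀ ≤ u x₀ t₀ := by
        intro y
        obtain ⟨y', hy', hey⟩ := (hper t₀).reduce y
        have : φ (y', t₀) ≤ φ p₀ := hmax' (y', t₀) ⟨hy', ht₀K⟩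
        have h2 : u y' t₀ ≤ u x₀ t₀ := by
          have h' : u y' t₀ - ε * t₀ ≤ u x₀ t₀ - ε * t₀ := this
          linarith
        rw [hey]; exact h2
      have hlap : lap (fun y => u y t₀) x₀ ≤ 0 := by
        apply Finset.sum_nonpos
        intro i _
        set h : ℝ → ℝ := fun s => u (Function.update x₀ i s) t₀ with hhdef
        have hhs : ContDiff ℝ (⊤ : ℕ∞) h :=
          (contDiff_slice_x hu t₀).comp (contDiff_update _ x₀ i)
        have hhm : ∀ s, h s ≤ h (x₀ i) := by
          intro s
          have h1 : h (x₀ i) = u x₀ t₀ := by rw [hhdef]; simp [Function.update_eq_self]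
          rw [h1]
          exact hvmax _
        have hkey : (fun s => pder i (fun y => u y t₀) (Function.update x₀ i s)) = deriv h :=
          funext fun s => pder_apply_update i x₀ s
        show pder i (pder i (fun y => u y t₀)) x₀ ≤ 0
        show deriv (fun s => pder i (fun y => u y t₀) (Function.update x₀ i s)) (x₀ i) ≤ 0
        rw [hkey]
        exact second_deriv_nonpos_at_max hhs hhm
      have hu0 : 0 < u x₀ t₀ := by
        have : φ p₀ = u x₀ t₀ - ε * t₀ := rfl
        nlinarith [hmax' (z₁, s₁) ⟨hz₁, hs₁⟩]
      have hpde0 := hpde x₀ t₀ ⟨ht₀pos, ht₀K.2⟩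
      have hle : deriv (u x₀) t₀ ≤ 0 := by
        rw [hpde0]
        have h1 : θ / 2 * lap (fun y => u y t₀) x₀ ≤ 0 :=
          mul_nonpos_of_nonneg_of_nonpos (by linarith) hlap
        have h2 : 0 ≤ a x₀ * u x₀ t₀ := mul_nonneg (ha x₀) hu0.le
        linarith
      linarith
    intro z s hs
    obtain ⟨y, hy, hey⟩ := (hper s).reduce z
    rw [hey]
    exact hcube y hy s hs
  intro x t ht
  refine le_of_forall_pos_le_add fun δ hδ => ?_
  have hε : 0 < δ / (T + 1) := div_pos hδ (by linarith)
  have h1 := key (δ / (T + 1)) hε x t ht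
  have h2 : δ / (T + 1) * t ≤ δ := by
    rw [div_mul_eq_mul_div, div_le_iff₀ (by linarith : (0:ℝ) < T + 1)]
    nlinarith [ht.1, ht.2]
  linarith

lemma pder_mul {f g : (Fin d → ℝ) → ℝ} (hf : ContDiff ℝ (⊤ : ℕ∞) f)
    (hg : ContDiff ℝ (⊤ : ℕ∞) g) (i : Fin d) (x : Fin d → ℝ) :
    pder i (fun y => f y * g y) x = f x * pder i g x + pder i f x * g x := by
  rw [pder_eq ((hf.mul hg).differentiable htop0) i, pder_eq (hf.differentiable htop0) i,
    pder_eq (hg.differentiable htop0) i,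
    fderiv_fun_mul (((hf.differentiable htop0) x)) (((hg.differentiable htop0) x))]
  simp [ContinuousLinearMap.add_apply, ContinuousLinearMap.smul_apply]
  ring

lemma lap_sq {v : (Fin d → ℝ) → ℝ} (hv : ContDiff ℝ (⊤ : ℕ∞) v) (x : Fin d → ℝ) :
    lap (fun y => (v y) ^ 2) x
      = 2 * v x * lap v x + 2 * ∑ i : Fin d, (pder i v x) ^ 2 := by
  unfold lap
  rw [Finset.mul_sum, Finset.mul_sum, ← Finset.sum_add_distrib]
  refine Finset.sum_congr rfl fun i _ => ?_
  have hsq : (fun y => (v y) ^ 2) = fun y => v y * v y := by funext y; ring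
  have h1 : pder i (fun y => (v y) ^ 2) = fun y => 2 * v y * pder i v y := by
    funext y
    rw [hsq, pder_mul hv hv i y]
    ring
  rw [h1]
  have h2 : (fun y => 2 * v y * pder i v y) = fun y => (fun z => 2 * v z) y * pder i v y := rfl
  rw [h2, pder_mul (by exact contDiff_const.mul hv) (contDiff_pder hv i) i x]
  have h3 : pder i (fun z => 2 * v z) x = 2 * pder i v x := by
    have : (fun z => 2 * v z) = fun z => (fun _ => (2:ℝ)) z * v z := rfl
    rw [this, pder_mul contDiff_const hv i x]
    have h0 : pder i (fun _ : Fin d → ℝ => (2:ℝ)) x = 0 := by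
      rw [pder_eq (differentiable_const 2) i, fderiv_fun_const]
      simp
    rw [h0]
    ring
  rw [h3]
  ring

lemma hasDerivAt_slice_t {u : (Fin d → ℝ) → ℝ → ℝ}
    (hu : ContDiff ℝ (⊤ : ℕ∞) fun p : (Fin d → ℝ) × ℝ => u p.1 p.2) (x : Fin d → ℝ) (t : ℝ) :
    HasDerivAt (u x)
      (fderiv ℝ (fun p : (Fin d → ℝ) × ℝ => u p.1 p.2) (x, t) (0, 1)) t := by
  have hcurve : HasDerivAt (fun s : ℝ => ((x, s) : (Fin d → ℝ) × ℝ)) ((0 : Fin d → ℝ), (1 : ℝ)) t :=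
    (hasDerivAt_const t x).prodMk (hasDerivAt_id t)
  exact ((hu.differentiable htop0) (x, t)).hasFDerivAt.comp_hasDerivAt t hcurve

lemma contDiff_ut {u : (Fin d → ℝ) → ℝ → ℝ}
    (hu : ContDiff ℝ (⊤ : ℕ∞) fun p : (Fin d → ℝ) × ℝ => u p.1 p.2) :
    ContDiff ℝ (⊤ : ℕ∞)
      (fun p : (Fin d → ℝ) × ℝ => fderiv ℝ (fun q : (Fin d → ℝ) × ℝ => u q.1 q.2) p (0, 1)) :=
  (hu.fderiv_right htops).clm_apply contDiff_const

lemma continuous_deriv_slice {u : (Fin d → ℝ) → ℝ → ℝ}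
    (hu : ContDiff ℝ (⊤ : ℕ∞) fun p : (Fin d → ℝ) × ℝ => u p.1 p.2) (t : ℝ) :
    Continuous fun x => deriv (u x) t := by
  have : (fun x => deriv (u x) t)
      = fun x => fderiv ℝ (fun q : (Fin d → ℝ) × ℝ => u q.1 q.2) (x, t) (0, 1) :=
    funext fun x => (hasDerivAt_slice_t hu x t).deriv
  rw [this]
  exact (contDiff_ut hu).continuous.comp (continuous_id.prodMk continuous_const)

lemma hasDerivAt_energy {u : (Fin d → ℝ) → ℝ → ℝ}
    (hu : ContDiff ℝ (⊤ : ℕ∞) fun p : (Fin d → ℝ) × ℝ => u p.1 p.2) (t₀ : ℝ) :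
    HasDerivAt (fun t => ∫ x in unitCube d, (u x t) ^ 2)
      (∫ x in unitCube d, 2 * u x t₀ * deriv (u x) t₀) t₀ := by
  set U : (Fin d → ℝ) × ℝ → ℝ := fun p => u p.1 p.2 with hU
  set ut : (Fin d → ℝ) → ℝ → ℝ := fun x t => fderiv ℝ U (x, t) (0, 1) with hutdef
  have hder : ∀ x t, HasDerivAt (u x) (ut x t) t := fun x t => hasDerivAt_slice_t hu x t
  have hutc : Continuous fun p : (Fin d → ℝ) × ℝ => 2 * U p * ut p.1 p.2 :=
    (continuous_const.mul hu.continuous).mul (contDiff_ut hu).continuous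
  -- bound on the compact set (unitCube d) ×ˢ Icc (t₀ - 1) (t₀ + 1)
  obtain ⟨C, hC⟩ := ((isCompact_Icc : IsCompact (unitCube d)).prod
    (isCompact_Icc : IsCompact (Set.Icc (t₀ - 1) (t₀ + 1)))).exists_bound_of_continuousOn
    hutc.continuousOn
  have main := hasDerivAt_integral_of_dominated_loc_of_deriv_le (μ := volume.restrict (unitCube d))
    (F := fun t x => (u x t) ^ 2) (F' := fun t x => 2 * u x t * ut x t)
    (x₀ := t₀) (bound := fun _ => C) (s := Metric.ball t₀ 1) (Metric.ball_mem_nhds t₀ one_pos)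
    (Filter.Eventually.of_forall fun t =>
      (((contDiff_slice_x hu t).continuous.pow 2).aestronglyMeasurable))
    (((contDiff_slice_x hu t₀).continuous.pow 2).continuousOn.integrableOn_compact isCompact_Icc)
    (((continuous_const.mul ((contDiff_slice_x hu t₀).continuous)).mul
      ((contDiff_ut hu).continuous.comp (continuous_id.prodMk continuous_const))).aestronglyMeasurable)
    ?_ ?_ ?_
  · have heq : (∫ x in unitCube d, 2 * u x t₀ * ut x t₀)
        = ∫ x in unitCube d, 2 * u x t₀ * deriv (u x) t₀ := by
      refine setIntegral_congr_fun measurableSet_Icc fun x _ => ?_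
      rw [(hder x t₀).deriv]
    rw [← heq]
    exact main.2
  · -- bound
    filter_upwards [ae_restrict_mem (measurableSet_Icc : MeasurableSet (unitCube d))] with x hx
    intro t htb
    have htI : t ∈ Set.Icc (t₀ - 1) (t₀ + 1) := by
      rw [Metric.mem_ball, Real.dist_eq] at htb
      constructor <;> [linarith [abs_lt.mp htb]; linarith [abs_lt.mp htb]]
    have := hC (x, t) ⟨hx, htI⟩
    simpa [Real.norm_eq_abs] using this
  · exact integrableOn_const ((isCompact_Icc : IsCompact (unitCube d)).measure_lt_top.ne)
  · exact Filter.Eventually.of_forall fun x => fun t _ => by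
      simpa [pow_one] using (hder x t).fun_pow 2

lemma energy_estimate {n : ℕ} {T θ : ℝ} (hT : 0 < T) (hθ : 0 ≤ θ)
    {a : (Fin (n + 1) → ℝ) → ℝ} (ha : ∀ x, 0 ≤ a x)
    {g : (Fin (n + 1) → ℝ) → ℝ → ℝ} (hgc : ∀ t, Continuous fun x => g x t)
    {w : (Fin (n + 1) → ℝ) → ℝ → ℝ}
    (hw : ContDiff ℝ (⊤ : ℕ∞) fun p : (Fin (n + 1) → ℝ) × ℝ => w p.1 p.2)
    (hper : ∀ t, ZPer fun x => w x t)
    (hpde : ∀ x, ∀ t ∈ Set.Ioc (0 : ℝ) T,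
      deriv (w x) t = θ / 2 * lap (fun y => w y t) x - a x * w x t + g x t)
    (hinit : ∀ x, w x 0 = 0) {c : ℝ} (hc : 0 ≤ c)
    (hgb : ∀ t ∈ Set.Ioc (0 : ℝ) T, (∫ x in unitCube (n + 1), (g x t) ^ 2) ≤ c) :
    ∀ t ∈ Set.Ioc (0 : ℝ) T,
      (∫ x in unitCube (n + 1), (w x t) ^ 2) ≤ c * Real.exp T := by
  have hE' : ∀ t, HasDerivAt (fun s => ∫ x in unitCube (n + 1), (w x s) ^ 2)
      (∫ x in unitCube (n + 1), 2 * w x t * deriv (w x) t) t :=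
    fun t => hasDerivAt_energy hw t
  have hE0 : (∫ x in unitCube (n + 1), (w x 0) ^ 2) = 0 := by
    calc (∫ x in unitCube (n + 1), (w x 0) ^ 2)
        = ∫ x in unitCube (n + 1), (0 : ℝ) :=
          setIntegral_congr_fun measurableSet_Icc fun x _ => by rw [hinit x]; ring
      _ = 0 := by simp
  have hEnn : ∀ t, 0 ≤ ∫ x in unitCube (n + 1), (w x t) ^ 2 :=
    fun t => setIntegral_nonneg measurableSet_Icc fun x _ => sq_nonneg _
  have hkey : ∀ t ∈ Set.Ioc (0 : ℝ) T,
      (∫ x in unitCube (n + 1), 2 * w x t * deriv (w x) t)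
        ≤ (∫ x in unitCube (n + 1), (w x t) ^ 2) + c := by
    intro t ht
    have hwx : ContDiff ℝ (⊤ : ℕ∞) (fun y => w y t) := contDiff_slice_x hw t
    have hsq : ContDiff ℝ (⊤ : ℕ∞) (fun y => (w y t) ^ 2) := hwx.pow 2
    have hwxc : Continuous fun y => w y t := hwx.continuous
    have hdc : Continuous fun x => deriv (w x) t := continuous_deriv_slice hw t
    have hlapc : Continuous fun x => lap (fun y => (w y t) ^ 2) x := by
      unfold lap
      exact continuous_finset_sum _ fun i _ =>
        (contDiff_pder (contDiff_pder hsq i) i).continuous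
    have hptle : ∀ x, 2 * w x t * deriv (w x) t
        ≤ θ / 2 * lap (fun y => (w y t) ^ 2) x + ((g x t) ^ 2 + (w x t) ^ 2) := by
      intro x
      rw [hpde x t ht, lap_sq hwx x]
      have h1 : (0 : ℝ) ≤ ∑ i : Fin (n + 1), (pder i (fun y => w y t) x) ^ 2 :=
        Finset.sum_nonneg fun i _ => sq_nonneg _
      nlinarith [mul_nonneg hθ h1, mul_nonneg (ha x) (sq_nonneg (w x t)),
        sq_nonneg (g x t - w x t)]
    have hint1 : IntegrableOn (fun x => 2 * w x t * deriv (w x) t) (unitCube (n + 1)) volume :=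
      ((continuous_const.mul hwxc).mul hdc).continuousOn.integrableOn_compact isCompact_Icc
    have hintg : IntegrableOn (fun x => (g x t) ^ 2) (unitCube (n + 1)) volume :=
      ((hgc t).pow 2).continuousOn.integrableOn_compact isCompact_Icc
    have hintw : IntegrableOn (fun x => (w x t) ^ 2) (unitCube (n + 1)) volume :=
      (hwxc.pow 2).continuousOn.integrableOn_compact isCompact_Icc
    have hintlap : IntegrableOn (fun x => θ / 2 * lap (fun y => (w y t) ^ 2) x)
        (unitCube (n + 1)) volume :=
      (continuous_const.mul hlapc).continuousOn.integrableOn_compact isCompact_Icc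
    have step1 : (∫ x in unitCube (n + 1), 2 * w x t * deriv (w x) t)
        ≤ ∫ x in unitCube (n + 1),
            (θ / 2 * lap (fun y => (w y t) ^ 2) x + ((g x t) ^ 2 + (w x t) ^ 2)) :=
      setIntegral_mono_on hint1
        (hintlap.add (hintg.add hintw)) measurableSet_Icc fun x _ => hptle x
    have hlap0 : (∫ x in unitCube (n + 1), lap (fun y => (w y t) ^ 2) x) = 0 := by
      have hpint : ∀ i : Fin (n + 1), IntegrableOn
          (fun x => pder i (pder i (fun y => (w y t) ^ 2)) x) (unitCube (n + 1)) volume :=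
        fun i => (contDiff_pder (contDiff_pder hsq i) i).continuous.continuousOn.integrableOn_compact
          isCompact_Icc
      unfold lap
      rw [integral_finset_sum _ (fun i _ => hpint i)]
      refine Finset.sum_eq_zero fun i _ => ?_
      have hsqper : ZPer fun y => (w y t) ^ 2 := fun x k =>
        congrArg (fun r : ℝ => r ^ 2) (hper t x k)
      exact integral_pder_eq_zero (contDiff_pder hsq i) (hsqper.pderZ i) i
    have hintgw : IntegrableOn (fun x => (g x t) ^ 2 + (w x t) ^ 2)
        (unitCube (n + 1)) volume := hintg.add hintw
    rw [integral_add hintlap hintgw, integral_add hintg hintw,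
      integral_const_mul, hlap0, mul_zero, zero_add] at step1
    have := hgb t ht
    linarith
  have hEc : Continuous fun s => ∫ x in unitCube (n + 1), (w x s) ^ 2 :=
    continuous_iff_continuousAt.mpr fun s => (hE' s).continuousAt
  have hψ : ∀ t : ℝ, HasDerivAt
      (fun s => ((∫ x in unitCube (n + 1), (w x s) ^ 2) + c) * Real.exp (-s))
      ((∫ x in unitCube (n + 1), 2 * w x t * deriv (w x) t) * Real.exp (-t)
        + ((∫ x in unitCube (n + 1), (w x t) ^ 2) + c) * -Real.exp (-t)) t := by
    intro t
    have h2 : HasDerivAt (fun s : ℝ => Real.exp (-s)) (-Real.exp (-t)) t := by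
      exact ((Real.hasDerivAt_exp (-t)).comp t (hasDerivAt_neg t)).congr_deriv (by simp)
    exact ((hE' t).add_const c).mul h2
  have hanti : AntitoneOn
      (fun s => ((∫ x in unitCube (n + 1), (w x s) ^ 2) + c) * Real.exp (-s))
      (Set.Icc 0 T) := by
    apply antitoneOn_of_deriv_nonpos (convex_Icc 0 T)
    · exact ((hEc.add continuous_const).mul
        (Real.continuous_exp.comp continuous_neg)).continuousOn
    · intro s _
      exact (hψ s).differentiableAt.differentiableWithinAt
    · intro s hs
      rw [interior_Icc] at hs
      rw [(hψ s).deriv]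
      have h3 := hkey s ⟨hs.1, hs.2.le⟩
      have h4 : 0 < Real.exp (-s) := Real.exp_pos _
      nlinarith
  intro t ht
  have h5 := hanti (Set.left_mem_Icc.mpr hT.le) ⟨ht.1.le, ht.2⟩ ht.1.le
  simp only [hE0, zero_add, neg_zero, Real.exp_zero, mul_one] at h5
  have h7 : 0 < Real.exp (-t) := Real.exp_pos _
  have h8 := mul_le_mul_of_nonneg_right h5 (Real.exp_pos t).le
  rw [mul_assoc, ← Real.exp_add, neg_add_cancel, Real.exp_zero, mul_one] at h8
  have h9 : Real.exp t ≤ Real.exp T := Real.exp_le_exp.mpr ht.2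
  nlinarith [hEnn t, mul_le_mul_of_nonneg_left h9 hc]

end

/-- Lipschitz continuity of the forward map `F ↦ K_θ F` in `L²`
(Lemma `bounds`, item (i)). -/
theorem forward_map_lipschitz_in_F {d : ℕ} (hd : 1 ≤ d) (T θmin θmax : ℝ)
    (hT : 0 < T) (hθmin : 0 < θmin) (hθ : θmin ≤ θmax) (Φ : LinkFun)
    (u0 : (Fin d → ℝ) → ℝ) (hu0 : ContDiff ℝ (⊤ : ℕ∞) u0) (hu0per : ZPer u0) :
    ∃ D > (0 : ℝ), ∀ θ ∈ Set.Icc θmin θmax,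
      ∀ F F₀ : (Fin d → ℝ) → ℝ, Continuous F → ZPer F → Continuous F₀ → ZPer F₀ →
      ∀ uF uF₀ : (Fin d → ℝ) → ℝ → ℝ,
        HeatSol T θ (fun x => Φ.toFun (F x)) u0 uF →
        HeatSol T θ (fun x => Φ.toFun (F₀ x)) u0 uF₀ →
        l2Q T (fun x t => uF x t - uF₀ x t) ≤ D * l2T (fun x => F x - F₀ x) := by
  obtain ⟨n, rfl⟩ : ∃ n, d = n + 1 := ⟨d - 1, (Nat.succ_pred_eq_of_pos hd).symm⟩
  obtain ⟨L₀, hL₀⟩ := Φ.derivs_bdd 1 le_rfl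
  set L := max L₀ 0 with hLdef
  have hLnn : (0 : ℝ) ≤ L := le_max_right _ _
  have hLb : ∀ s, |deriv Φ.toFun s| ≤ L := by
    intro s
    have h := hL₀ s
    rw [iteratedDeriv_one] at h
    exact le_trans h (le_max_left _ _)
  obtain ⟨M₁, hM₁⟩ := (isCompact_Icc : IsCompact (unitCube (n + 1))).exists_bound_of_continuousOn
    hu0.continuous.continuousOn
  set M := max M₁ 0 with hMdef
  have hMnn : (0 : ℝ) ≤ M := le_max_right _ _
  have hMb : ∀ x, |u0 x| ≤ M := by
    intro x
    obtain ⟨y, hy, hxy⟩ := hu0per.reduce x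
    rw [hxy]
    exact le_trans (by simpa [Real.norm_eq_abs] using hM₁ y hy) (le_max_left _ _)
  have hMVT : ∀ p q : ℝ, |Φ.toFun p - Φ.toFun q| ≤ L * |p - q| := by
    intro p q
    have h := Convex.norm_image_sub_le_of_norm_deriv_le
      (fun s _ => (Φ.smooth.differentiable htop0) s)
      (fun s _ => by rw [Real.norm_eq_abs]; exact hLb s)
      convex_univ (Set.mem_univ q) (Set.mem_univ p)
    simpa [Real.norm_eq_abs] using h
  have hsq : 0 < Real.sqrt (T * Real.exp T) :=
    Real.sqrt_pos.mpr (mul_pos hT (Real.exp_pos T))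
  refine ⟨Real.sqrt (T * Real.exp T) * ((L + 1) * (M + 1)),
    mul_pos hsq (mul_pos (by linarith) (by linarith)), ?_⟩
  intro θ hθmem F F₀ hFc hFper hF₀c hF₀per uF uF₀ hHF hHF₀
  obtain ⟨hsmF, hperF, hpdeF, hinitF⟩ := hHF
  obtain ⟨hsmF₀, hperF₀, hpdeF₀, hinitF₀⟩ := hHF₀
  have hsmF' : ContDiff ℝ (⊤ : ℕ∞) (fun p : (Fin (n + 1) → ℝ) × ℝ => uF p.1 p.2) := hsmF
  have hsmF₀' : ContDiff ℝ (⊤ : ℕ∞) (fun p : (Fin (n + 1) → ℝ) × ℝ => uF₀ p.1 p.2) := hsmF₀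
  have hθpos : (0 : ℝ) < θ := lt_of_lt_of_le hθmin hθmem.1
  have hΦnn : ∀ s : ℝ, 0 ≤ Φ.toFun s := fun s => le_of_lt (lt_trans Φ.fmin_pos (Φ.gt_fmin s))
  -- uniform bound on uF₀ via the maximum principle
  have hb1 : ∀ x, ∀ t ∈ Set.Icc (0 : ℝ) T, uF₀ x t ≤ M :=
    max_principle hT hθpos.le (fun x => hΦnn (F₀ x)) hsmF₀' hperF₀ hpdeF₀ hMnn
      (fun x => by rw [hinitF₀ x]; exact (abs_le.mp (hMb x)).2)
  have hb2 : ∀ x, ∀ t ∈ Set.Icc (0 : ℝ) T, -uF₀ x t ≤ M := by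
    have hpden : ∀ x : Fin (n + 1) → ℝ, ∀ t ∈ Set.Ioc (0 : ℝ) T,
        deriv (fun s => -uF₀ x s) t
          = θ / 2 * lap (fun y => -uF₀ y t) x - Φ.toFun (F₀ x) * -uF₀ x t := by
      intro x t ht
      rw [deriv.fun_neg, hpdeF₀ x t ht, lap_neg (contDiff_slice_x hsmF₀' t) x]
      ring
    exact max_principle hT hθpos.le (fun x => hΦnn (F₀ x)) hsmF₀'.neg
      (fun t x k => congrArg Neg.neg (hperF₀ t x k)) hpden hMnn
      (fun x => by rw [hinitF₀ x]; exact neg_le.mpr (abs_le.mp (hMb x)).1)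
  have hbound : ∀ x, ∀ t ∈ Set.Icc (0 : ℝ) T, |uF₀ x t| ≤ M := fun x t ht =>
    abs_le.mpr ⟨neg_le.mp (hb2 x t ht), hb1 x t ht⟩
  -- setup for the energy estimate
  have hsmw : ContDiff ℝ (⊤ : ℕ∞)
      (fun p : (Fin (n + 1) → ℝ) × ℝ => uF p.1 p.2 - uF₀ p.1 p.2) := hsmF'.sub hsmF₀'
  have hperw : ∀ t, ZPer fun x => uF x t - uF₀ x t := fun t x k =>
    congrArg₂ (fun r s : ℝ => r - s) (hperF t x k) (hperF₀ t x k)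
  have hpdew : ∀ x : Fin (n + 1) → ℝ, ∀ t ∈ Set.Ioc (0 : ℝ) T,
      deriv (fun s => uF x s - uF₀ x s) t
        = θ / 2 * lap (fun y => uF y t - uF₀ y t) x
          - Φ.toFun (F x) * (uF x t - uF₀ x t)
          + (Φ.toFun (F₀ x) - Φ.toFun (F x)) * uF₀ x t := by
    intro x t ht
    have h1 : DifferentiableAt ℝ (uF x) t := (contDiff_slice_t hsmF' x).differentiable htop0 t
    have h2 : DifferentiableAt ℝ (uF₀ x) t := (contDiff_slice_t hsmF₀' x).differentiable htop0 t
    rw [deriv_fun_sub h1 h2, hpdeF x t ht, hpdeF₀ x t ht,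
      lap_sub (contDiff_slice_x hsmF' t) (contDiff_slice_x hsmF₀' t) x]
    ring
  have hinitw : ∀ x : Fin (n + 1) → ℝ, uF x 0 - uF₀ x 0 = 0 := by
    intro x
    rw [hinitF x, hinitF₀ x, sub_self]
  set S := ∫ x in unitCube (n + 1), (F x - F₀ x) ^ 2 with hSdef
  have hSnn : 0 ≤ S := setIntegral_nonneg measurableSet_Icc fun x _ => sq_nonneg _
  have hcnn : 0 ≤ L ^ 2 * M ^ 2 * S := by positivity
  have hgc : ∀ t : ℝ, Continuous fun x => (Φ.toFun (F₀ x) - Φ.toFun (F x)) * uF₀ x t :=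
    fun t => ((Φ.smooth.continuous.comp hF₀c).sub (Φ.smooth.continuous.comp hFc)).mul
      (contDiff_slice_x hsmF₀' t).continuous
  have hgb : ∀ t ∈ Set.Ioc (0 : ℝ) T,
      (∫ x in unitCube (n + 1), ((Φ.toFun (F₀ x) - Φ.toFun (F x)) * uF₀ x t) ^ 2)
        ≤ L ^ 2 * M ^ 2 * S := by
    intro t ht
    have hptw : ∀ x ∈ unitCube (n + 1),
        ((Φ.toFun (F₀ x) - Φ.toFun (F x)) * uF₀ x t) ^ 2
          ≤ L ^ 2 * M ^ 2 * (F x - F₀ x) ^ 2 := by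
      intro x _
      have h1 := hMVT (F₀ x) (F x)
      have h2 := hbound x t ⟨ht.1.le, ht.2⟩
      have h3 : |(Φ.toFun (F₀ x) - Φ.toFun (F x)) * uF₀ x t| ≤ L * |F₀ x - F x| * M := by
        rw [abs_mul]
        exact mul_le_mul h1 h2 (abs_nonneg _) (mul_nonneg hLnn (abs_nonneg _))
      calc ((Φ.toFun (F₀ x) - Φ.toFun (F x)) * uF₀ x t) ^ 2
          = |(Φ.toFun (F₀ x) - Φ.toFun (F x)) * uF₀ x t| ^ 2 := (sq_abs _).symm
        _ ≤ (L * |F₀ x - F x| * M) ^ 2 :=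
            pow_le_pow_left₀ (abs_nonneg _) h3 2
        _ = L ^ 2 * M ^ 2 * (F x - F₀ x) ^ 2 := by
            rw [mul_pow, mul_pow, sq_abs]
            ring
    have hi1 : IntegrableOn
        (fun x => ((Φ.toFun (F₀ x) - Φ.toFun (F x)) * uF₀ x t) ^ 2)
        (unitCube (n + 1)) volume :=
      (((hgc t).pow 2)).continuousOn.integrableOn_compact isCompact_Icc
    have hi2 : IntegrableOn (fun x => L ^ 2 * M ^ 2 * (F x - F₀ x) ^ 2)
        (unitCube (n + 1)) volume :=
      (continuous_const.mul ((hFc.sub hF₀c).pow 2)).continuousOn.integrableOn_compact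
        isCompact_Icc
    calc (∫ x in unitCube (n + 1), ((Φ.toFun (F₀ x) - Φ.toFun (F x)) * uF₀ x t) ^ 2)
        ≤ ∫ x in unitCube (n + 1), L ^ 2 * M ^ 2 * (F x - F₀ x) ^ 2 :=
          setIntegral_mono_on hi1 hi2 measurableSet_Icc hptw
      _ = L ^ 2 * M ^ 2 * S := by rw [integral_const_mul]
  have hEbound := energy_estimate (w := fun x t => uF x t - uF₀ x t)
    (a := fun x => Φ.toFun (F x))
    (g := fun x t => (Φ.toFun (F₀ x) - Φ.toFun (F x)) * uF₀ x t)
    hT hθpos.le (fun x => hΦnn (F x)) hgc hsmw hperw hpdew hinitw hcnn hgb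
  -- conclude
  have hl2 : l2Q T (fun x t => uF x t - uF₀ x t)
      ≤ Real.sqrt (T * (L ^ 2 * M ^ 2 * S * Real.exp T)) := by
    apply Real.sqrt_le_sqrt
    have hEc : Continuous fun s => ∫ x in unitCube (n + 1), (uF x s - uF₀ x s) ^ 2 :=
      continuous_iff_continuousAt.mpr fun s =>
        ((hasDerivAt_energy (u := fun x t => uF x t - uF₀ x t) hsmw s)).continuousAt
    have hEI : IntegrableOn (fun s => ∫ x in unitCube (n + 1), (uF x s - uF₀ x s) ^ 2)
        (Set.Ioc 0 T) volume :=
      (hEc.continuousOn.integrableOn_compact isCompact_Icc).mono_set Set.Ioc_subset_Icc_self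
    have hCI : IntegrableOn (fun _ : ℝ => L ^ 2 * M ^ 2 * S * Real.exp T)
        (Set.Ioc 0 T) volume :=
      integrableOn_const (by rw [Real.volume_Ioc]; exact ENNReal.ofReal_ne_top)
    calc (∫ t in Set.Ioc (0 : ℝ) T, ∫ x in unitCube (n + 1), (uF x t - uF₀ x t) ^ 2)
        ≤ ∫ _ in Set.Ioc (0 : ℝ) T, L ^ 2 * M ^ 2 * S * Real.exp T :=
          setIntegral_mono_on hEI hCI measurableSet_Ioc fun t ht => hEbound t ht
      _ = T * (L ^ 2 * M ^ 2 * S * Real.exp T) := by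
          rw [setIntegral_const, Real.volume_real_Ioc_of_le hT.le, sub_zero,
            smul_eq_mul]
  have hl2T : l2T (fun x => F x - F₀ x) = Real.sqrt S := rfl
  calc l2Q T (fun x t => uF x t - uF₀ x t)
      ≤ Real.sqrt (T * (L ^ 2 * M ^ 2 * S * Real.exp T)) := hl2
    _ = Real.sqrt (T * Real.exp T) * ((L * M) * Real.sqrt S) := by
        rw [show T * (L ^ 2 * M ^ 2 * S * Real.exp T)
            = (T * Real.exp T) * ((L * M) ^ 2 * S) by ring,
          Real.sqrt_mul (mul_nonneg hT.le (Real.exp_pos T).le),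
          Real.sqrt_mul (sq_nonneg (L * M)), Real.sqrt_sq (mul_nonneg hLnn hMnn)]
    _ ≤ Real.sqrt (T * Real.exp T) * (((L + 1) * (M + 1)) * Real.sqrt S) := by
        apply mul_le_mul_of_nonneg_left _ (Real.sqrt_nonneg _)
        apply mul_le_mul_of_nonneg_right _ (Real.sqrt_nonneg _)
        nlinarith
    _ = Real.sqrt (T * Real.exp T) * ((L + 1) * (M + 1)) * l2T (fun x => F x - F₀ x) := by
        rw [hl2T]; ring
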